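/- Let (G, σ) be a signed bipartite planar graph of negative girth at least 6 (i.e., every cycle with an odd number of negative edges has length at least 6). Then (G, σ) admits a switching homomorphism to (K_{3,3}, M); equivalently, χ_c(G, σ) ≤ 3. (One may assume as given: (a) Grötzsch's theorem, that loopless triangle-free planar multigraphs are 3-colorable, and (b) the packing theorem that such (G,σ) admits six switching-equivalent signatures with pairwise disjoint negative edge sets.) -/

import Mathlib

/-- A signed graph: two symmetric edge relations (positive and negative edges).
Parallel edges of different signs (digons) and negative loops are representable;
positive loops are disallowed (graphs in the paper have no loops unless specified,
loops occurring in circular cliques are always negative). -/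
structure SGraph (V : Type) where
  pos : V → V → Prop
  neg : V → V → Prop
  pos_symm : ∀ u v, pos u v → pos v u
  neg_symm : ∀ u v, neg u v → neg v u
  pos_irrefl : ∀ v, ¬ pos v v

namespace SGraph

variable {V W : Type}

/-- An edge-sign preserving homomorphism: preserves adjacency and edge signs. -/
def IsSpHom (G : SGraph V) (H : SGraph W) (f : V → W) : Prop :=
  (∀ u v, G.pos u v → H.pos (f u) (f v)) ∧ (∀ u v, G.neg u v → H.neg (f u) (f v))

/-- The signed graph obtained from `G` by switching at the set of vertices where `s` is `true`:
the sign of an edge is flipped exactly when its endpoints get different values of `s`. -/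
def switch (G : SGraph V) (s : V → Bool) : SGraph V where
  pos u v := (s u = s v ∧ G.pos u v) ∨ (s u ≠ s v ∧ G.neg u v)
  neg u v := (s u = s v ∧ G.neg u v) ∨ (s u ≠ s v ∧ G.pos u v)
  pos_symm := by
    rintro u v (⟨h, hp⟩ | ⟨h, hn⟩)
    · exact Or.inl ⟨h.symm, G.pos_symm u v hp⟩
    · exact Or.inr ⟨fun e => h e.symm, G.neg_symm u v hn⟩
  neg_symm := by
    rintro u v (⟨h, hn⟩ | ⟨h, hp⟩)
    · exact Or.inl ⟨h.symm, G.neg_symm u v hn⟩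
    · exact Or.inr ⟨fun e => h e.symm, G.pos_symm u v hp⟩
  pos_irrefl := by
    rintro v (⟨_, hp⟩ | ⟨h, _⟩)
    · exact G.pos_irrefl v hp
    · exact h rfl

/-- A switching homomorphism: an edge-sign preserving homomorphism after switching
at a suitable set of vertices of the source (equivalently, a vertex map preserving
adjacency and the signs of closed walks). -/
def SwHom (G : SGraph V) (H : SGraph W) : Prop :=
  ∃ (s : V → Bool) (f : V → W), (G.switch s).IsSpHom H f

/-- The underlying graph of the signed graph is bipartite. -/
def Bipartite (G : SGraph V) : Prop :=
  ∃ c : V → Bool, ∀ u v, G.pos u v ∨ G.neg u v → c u ≠ c v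

end SGraph

/-- `x` reduced modulo `r` into `[0, r)` (for `r > 0`). -/
noncomputable def rmod (x r : ℝ) : ℝ := x - r * ⌊x / r⌋

/-- The circular distance between the points `x` and `y` of the circle of
circumference `r` (the length of the shorter arc joining them). -/
noncomputable def cdist (r x y : ℝ) : ℝ := min (rmod (x - y) r) (rmod (y - x) r)

namespace SGraph

variable {V : Type}

/-- A circular `r`-coloring of a signed graph: vertices get points of a circle of
circumference `r` such that the endpoints of each positive edge are at circular
distance at least `1`, and each endpoint of a negative edge is at circular distance
at least `1` from the antipode of the other endpoint (equivalently, the endpoints of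
a negative edge are at circular distance at most `r/2 - 1`). -/
def IsCircColoring (G : SGraph V) (r : ℝ) (φ : V → ℝ) : Prop :=
  (∀ u v, G.pos u v → 1 ≤ cdist r (φ u) (φ v)) ∧
  (∀ u v, G.neg u v → 1 ≤ cdist r (φ u) (φ v + r / 2))

/-- The circular chromatic number of a signed graph. -/
noncomputable def circChrom (G : SGraph V) : ℝ :=
  sInf {r : ℝ | 1 ≤ r ∧ ∃ φ : V → ℝ, G.IsCircColoring r φ}

end SGraph

/-- The signed graph `(K_{k,k}, M)`: the complete bipartite graph `K_{k,k}` whose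
negative edges form a perfect matching (the edges `inl i — inr i`). -/
def KkkM (k : ℕ) : SGraph (Fin k ⊕ Fin k) where
  pos x y := ∃ i j : Fin k, i ≠ j ∧
    ((x = Sum.inl i ∧ y = Sum.inr j) ∨ (y = Sum.inl i ∧ x = Sum.inr j))
  neg x y := ∃ i : Fin k, (x = Sum.inl i ∧ y = Sum.inr i) ∨ (y = Sum.inl i ∧ x = Sum.inr i)
  pos_symm := by
    rintro x y ⟨i, j, hij, (⟨h1, h2⟩ | ⟨h1, h2⟩)⟩
    · exact ⟨i, j, hij, Or.inr ⟨h1, h2⟩⟩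
    · exact ⟨i, j, hij, Or.inl ⟨h1, h2⟩⟩
  neg_symm := by
    rintro x y ⟨i, (⟨h1, h2⟩ | ⟨h1, h2⟩)⟩
    · exact ⟨i, Or.inr ⟨h1, h2⟩⟩
    · exact ⟨i, Or.inl ⟨h1, h2⟩⟩
  pos_irrefl := by
    rintro v ⟨i, j, _, (⟨h1, h2⟩ | ⟨h1, h2⟩)⟩ <;> (subst h1; simp at h2)

/-- `σ` and `τ` are switching equivalent signatures on the graph `G`:
`τ` is obtained from `σ` by switching at the set of vertices where `sw` is `true`
(the sign of an edge flips exactly when its endpoints get different values of `sw`). -/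
def SwEquiv {V : Type} (G : SimpleGraph V) (σ τ : Sym2 V → Bool) : Prop :=
  ∃ sw : V → Bool, ∀ u v : V, G.Adj u v →
    τ s(u, v) = Bool.xor (σ s(u, v)) (Bool.xor (sw u) (sw v))

/-- The signed graph determined by a graph `G` and a signature `σ` on its edges
(`true` = positive). -/
def toSGraph {V : Type} (G : SimpleGraph V) (σ : Sym2 V → Bool) : SGraph V where
  pos u v := G.Adj u v ∧ σ s(u, v) = true
  neg u v := G.Adj u v ∧ σ s(u, v) = false
  pos_symm := by
    rintro u v ⟨h, hs⟩
    exact ⟨h.symm, by rwa [Sym2.eq_swap]⟩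
  neg_symm := by
    rintro u v ⟨h, hs⟩
    exact ⟨h.symm, by rwa [Sym2.eq_swap]⟩
  pos_irrefl := fun v h => G.loopless.irrefl v h.1

/-- The image (simple) graph of `H` under a vertex map `f`: the contraction/quotient
graph, with loops removed and parallel edges merged. -/
def mapGraph {W W' : Type} (H : SimpleGraph W) (f : W → W') : SimpleGraph W' where
  Adj x y := x ≠ y ∧ ∃ u v, H.Adj u v ∧ f u = x ∧ f v = y
  symm := ⟨by
    rintro x y ⟨hne, u, v, h, hu, hv⟩
    exact ⟨hne.symm, v, u, h.symm, hv, hu⟩⟩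
  loopless := ⟨fun x h => h.1 rfl⟩


noncomputable section
namespace K33Maux

lemma cdist_ge3 (x y : ℝ) (k : ℤ) (h1 : 1 ≤ x - y - 3*k) (h2 : x - y - 3*k ≤ 2) :
    1 ≤ cdist 3 x y := by
  have hf1 : ⌊(x - y)/3⌋ = k := by
    rw [Int.floor_eq_iff]
    constructor
    · rw [le_div_iff₀ (by norm_num : (0:ℝ) < 3)]; push_cast; linarith
    · rw [div_lt_iff₀ (by norm_num : (0:ℝ) < 3)]; push_cast; linarith
  have hf2 : ⌊(y - x)/3⌋ = -k-1 := by
    rw [Int.floor_eq_iff]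
    constructor
    · rw [le_div_iff₀ (by norm_num : (0:ℝ) < 3)]; push_cast; linarith
    · rw [div_lt_iff₀ (by norm_num : (0:ℝ) < 3)]; push_cast; linarith
  unfold cdist rmod
  rw [hf1, hf2]
  apply le_min <;> push_cast <;> linarith

lemma flip_pair {V : Type} {H : SimpleGraph V} {g h : V → Bool}
    (hg : ∀ a b, H.Adj a b → g a ≠ g b) (hh : ∀ a b, H.Adj a b → h a ≠ h b) :
    ∀ {u v : V}, H.Reachable u v → xor (g u) (g v) = xor (h u) (h v) := by
  intro u v hr
  obtain ⟨p⟩ := hr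
  induction p with
  | nil => simp
  | @cons a b c' hadj p ih =>
    have h1 := hg _ _ hadj
    have h2 := hh _ _ hadj
    revert h1 h2 ih
    cases g a <;> cases g b <;> cases g c' <;> cases h a <;> cases h b <;> cases h c' <;> simp_all

def negSub {V : Type} (G : SimpleGraph V) (μ : Sym2 V → Bool) : SimpleGraph V where
  Adj a b := G.Adj a b ∧ μ s(a, b) = false
  symm := ⟨fun a b h => ⟨h.1.symm, by rw [Sym2.eq_swap]; exact h.2⟩⟩
  loopless := ⟨fun a h => G.loopless.irrefl a h.1⟩

end K33Maux
end

open K33Maux in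
/-- every signed bipartite planar graph of negative girth at least 6
admits a switching homomorphism to `(K_{3,3}, M)`; equivalently `χ_c(G,σ) ≤ 3`.
Planarity is taken as an abstract predicate, together with (a) Grötzsch's theorem for
loopless triangle-free planar (multi)graphs and the fact that planarity is preserved
by contracting a subgraph, and (b) the packing theorem providing six switching
equivalent signatures with pairwise disjoint negative edge sets. -/
theorem bipartite_planar_girth6_to_K33M
    (Planar : ∀ (W : Type), SimpleGraph W → Prop)
    (grotzsch : ∀ (W : Type) (H : SimpleGraph W), Planar W H → H.CliqueFree 3 →
      H.Colorable 3)
    (contract_planar : ∀ (A B : Type) (H H₁ : SimpleGraph A) (f : A → B), H₁ ≤ H →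
      (∀ u v : A, f u = f v ↔ H₁.Reachable u v) → Planar A H → Planar B (mapGraph H f))
    {V : Type} [Fintype V] (G : SimpleGraph V) (σ : Sym2 V → Bool)
    (hplanar : Planar V G)
    (hbip : ∃ c : V → Bool, ∀ u v, G.Adj u v → c u ≠ c v)
    (hgirth : ∀ (u : V) (w : G.Walk u u), w.IsCycle →
      Odd (w.edges.countP fun e => !σ e) → 6 ≤ w.length)
    (hpack : ∃ τ : Fin 6 → Sym2 V → Bool, (∀ i, SwEquiv G σ (τ i)) ∧
      ∀ i j, i ≠ j → ∀ e ∈ G.edgeSet, ¬(τ i e = false ∧ τ j e = false)) :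
    (toSGraph G σ).SwHom (KkkM 3) ∧ (toSGraph G σ).circChrom ≤ 3 := by
  clear hgirth
  obtain ⟨c, hc⟩ := hbip
  obtain ⟨τ, hτ, hdisj⟩ := hpack
  choose sw hsw using hτ
  obtain ⟨S, hSrel⟩ : ∃ S : Fin 6 → V → Bool, ∀ (i : Fin 6) (a b : V), G.Adj a b →
      τ i s(a,b) = xor (τ 0 s(a,b)) (xor (S i a) (S i b)) := by
    refine ⟨fun i v => xor (sw 0 v) (sw i v), ?_⟩
    intro i a b h
    show τ i s(a,b) = xor (τ 0 s(a,b)) (xor (xor (sw 0 a) (sw i a)) (xor (sw 0 b) (sw i b)))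
    rw [hsw i a b h, hsw 0 a b h]
    generalize σ s(a,b) = A
    generalize sw 0 a = B
    generalize sw 0 b = B'
    generalize sw i a = D
    generalize sw i b = E
    revert A B B' D E
    decide
  set H1 := negSub G (τ 0) with hH1
  have hSflip : ∀ (i : Fin 6), i ≠ 0 → ∀ a b, H1.Adj a b → S i a ≠ S i b := by
    intro i hi a b hab
    have hG := hab.1
    have h0 : τ 0 s(a,b) = false := hab.2
    have hne := hdisj 0 i (Ne.symm hi) s(a,b) (G.mem_edgeSet.2 hG)
    have hi1 : τ i s(a,b) = true := by
      cases hb : τ i s(a,b)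
      · exact absurd ⟨h0, hb⟩ hne
      · rfl
    have hr := hSrel i a b hG
    rw [h0, hi1] at hr
    revert hr
    cases S i a <;> cases S i b <;> simp
  have hcflip : ∀ a b, H1.Adj a b → c a ≠ c b := fun a b hab => hc a b hab.1
  have hSreach : ∀ (i : Fin 6), i ≠ 0 → ∀ u v : V, H1.Reachable u v →
      xor (S i u) (S i v) = xor (c u) (c v) :=
    fun i hi u v hr => flip_pair (hSflip i hi) hcflip hr
  have negOn : ∀ (i : Fin 6), i ≠ 0 → ∀ u v, G.Adj u v → τ 0 s(u,v) = true →
      H1.Reachable u v → τ i s(u,v) = false := by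
    intro i hi u v hadj h0 hr
    have h1 := hSrel i u v hadj
    rw [h0, hSreach i hi u v hr] at h1
    have h2 := hc u v hadj
    rw [h1]
    revert h2; cases c u <;> cases c v <;> simp
  have claimLoop : ∀ u v, G.Adj u v → τ 0 s(u,v) = true → ¬ H1.Reachable u v := by
    intro u v hadj h0 hr
    exact hdisj 1 2 (by decide) s(u,v) (G.mem_edgeSet.2 hadj)
      ⟨negOn 1 (by decide) u v hadj h0 hr, negOn 2 (by decide) u v hadj h0 hr⟩
  have hle : H1 ≤ G := fun a b h => h.1
  have hfiff : ∀ u v : V, H1.connectedComponentMk u = H1.connectedComponentMk v ↔ H1.Reachable u v :=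
    fun u v => SimpleGraph.ConnectedComponent.eq
  have hplanar2 := contract_planar V H1.ConnectedComponent G H1 H1.connectedComponentMk hle hfiff hplanar
  have mk3 : ∀ (u v : V), G.Adj u v → H1.connectedComponentMk u ≠ H1.connectedComponentMk v →
      τ 0 s(u,v) = true := by
    intro u v hadj hne
    cases hb : τ 0 s(u,v)
    · exact absurd ((hfiff u v).mpr (SimpleGraph.Adj.reachable ⟨hadj, hb⟩)) hne
    · rfl
  have hcf : (mapGraph G H1.connectedComponentMk).CliqueFree 3 := by
    classical
    intro t ht
    obtain ⟨x, y, z, hxy, hxz, hyz, rfl⟩ := Finset.card_eq_three.mp ht.card_eq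
    have hcl := ht.isClique
    have haxy : (mapGraph G H1.connectedComponentMk).Adj x y :=
      hcl (by simp) (by simp) hxy
    have hayz : (mapGraph G H1.connectedComponentMk).Adj y z :=
      hcl (by simp) (by simp) hyz
    have hazx : (mapGraph G H1.connectedComponentMk).Adj z x :=
      hcl (by simp) (by simp) (Ne.symm hxz)
    obtain ⟨hne1, u1, v1, ha1, hu1, hv1⟩ := haxy
    obtain ⟨hne2, u2, v2, ha2, hu2, hv2⟩ := hayz
    obtain ⟨hne3, u3, v3, ha3, hu3, hv3⟩ := hazx
    have h01 : τ 0 s(u1,v1) = true := mk3 u1 v1 ha1 (by rw [hu1, hv1]; exact hne1)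
    have h02 : τ 0 s(u2,v2) = true := mk3 u2 v2 ha2 (by rw [hu2, hv2]; exact hne2)
    have h03 : τ 0 s(u3,v3) = true := mk3 u3 v3 ha3 (by rw [hu3, hv3]; exact hne3)
    have hex : ∀ j : Fin 5, τ j.succ s(u1,v1) = false ∨ τ j.succ s(u2,v2) = false ∨
        τ j.succ s(u3,v3) = false := by
      intro j
      have hj : (j.succ : Fin 6) ≠ 0 := Fin.succ_ne_zero j
      have E1 := hSreach j.succ hj v1 u2 ((hfiff _ _).mp (hv1.trans hu2.symm))
      have E2 := hSreach j.succ hj v2 u3 ((hfiff _ _).mp (hv2.trans hu3.symm))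
      have E3 := hSreach j.succ hj v3 u1 ((hfiff _ _).mp (hv3.trans hu1.symm))
      have C1 := hc u1 v1 ha1
      have C2 := hc u2 v2 ha2
      have C3 := hc u3 v3 ha3
      have T1 := hSrel j.succ u1 v1 ha1
      have T2 := hSrel j.succ u2 v2 ha2
      have T3 := hSrel j.succ u3 v3 ha3
      rw [h01] at T1; rw [h02] at T2; rw [h03] at T3
      revert E1 E2 E3 C1 C2 C3 T1 T2 T3
      generalize S j.succ u1 = p1
      generalize S j.succ v1 = q1
      generalize S j.succ u2 = p2
      generalize S j.succ v2 = q2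
      generalize S j.succ u3 = p3
      generalize S j.succ v3 = q3
      generalize c u1 = d1
      generalize c v1 = e1
      generalize c u2 = d2
      generalize c v2 = e2
      generalize c u3 = d3
      generalize c v3 = e3
      generalize τ j.succ s(u1,v1) = t1
      generalize τ j.succ s(u2,v2) = t2
      generalize τ j.succ s(u3,v3) = t3
      revert p1 q1 p2 q2 p3 q3 d1 e1 d2 e2 d3 e3 t1 t2 t3
      decide
    have hchoice : ∀ j : Fin 5, ∃ i : Fin 3,
        τ j.succ (![s(u1,v1), s(u2,v2), s(u3,v3)] i) = false := by
      intro j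
      rcases hex j with h | h | h
      · exact ⟨0, h⟩
      · exact ⟨1, h⟩
      · exact ⟨2, h⟩
    choose g hg using hchoice
    obtain ⟨j, j', hjj, hgeq⟩ := Fintype.exists_ne_map_eq_of_card_lt g (by norm_num)
    have hmem : ∀ i : Fin 3, (![s(u1,v1), s(u2,v2), s(u3,v3)] i) ∈ G.edgeSet := by
      intro i; fin_cases i <;> simp [ha1, ha2, ha3]
    refine hdisj j.succ j'.succ ((Fin.succ_injective 5).ne hjj) _ (hmem (g j)) ⟨hg j, ?_⟩
    rw [hgeq]; exact hg j'
  obtain ⟨C⟩ := grotzsch _ _ hplanar2 hcf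
  have fact1 : ∀ u v, G.Adj u v → τ 0 s(u,v) = true →
      C (H1.connectedComponentMk u) ≠ C (H1.connectedComponentMk v) := by
    intro u v hadj h0
    have hne : H1.connectedComponentMk u ≠ H1.connectedComponentMk v :=
      fun h => claimLoop u v hadj h0 ((hfiff u v).mp h)
    exact C.valid ⟨hne, u, v, hadj, rfl, rfl⟩
  have fact2 : ∀ u v, G.Adj u v → τ 0 s(u,v) = false →
      C (H1.connectedComponentMk u) = C (H1.connectedComponentMk v) := by
    intro u v hadj h0
    exact congrArg C ((hfiff u v).mpr (SimpleGraph.Adj.reachable ⟨hadj, h0⟩))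
  have hpos' : ∀ u v, ((toSGraph G σ).switch (sw 0)).pos u v → G.Adj u v ∧ τ 0 s(u,v) = true := by
    rintro u v (⟨hs, hadj, hs2⟩ | ⟨hs, hadj, hs2⟩) <;> refine ⟨hadj, ?_⟩ <;>
      rw [hsw 0 u v hadj, hs2] <;> revert hs <;> cases sw 0 u <;> cases sw 0 v <;> simp
  have hneg' : ∀ u v, ((toSGraph G σ).switch (sw 0)).neg u v → G.Adj u v ∧ τ 0 s(u,v) = false := by
    rintro u v (⟨hs, hadj, hs2⟩ | ⟨hs, hadj, hs2⟩) <;> refine ⟨hadj, ?_⟩ <;>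
      rw [hsw 0 u v hadj, hs2] <;> revert hs <;> cases sw 0 u <;> cases sw 0 v <;> simp
  constructor
  · refine ⟨sw 0, fun v => if c v then Sum.inl (C (H1.connectedComponentMk v))
      else Sum.inr (C (H1.connectedComponentMk v)), ?_, ?_⟩
    · intro u v hp
      obtain ⟨hadj, h0⟩ := hpos' u v hp
      have hC := fact1 u v hadj h0
      have hcc := hc u v hadj
      cases hcu : c u
      · have hcv : c v = true := by revert hcc; rw [hcu]; cases c v <;> simp
        exact ⟨C (H1.connectedComponentMk v), C (H1.connectedComponentMk u), hC.symm,
          Or.inr ⟨by simp [hcv], by simp [hcu]⟩⟩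
      · have hcv : c v = false := by revert hcc; rw [hcu]; cases c v <;> simp
        exact ⟨C (H1.connectedComponentMk u), C (H1.connectedComponentMk v), hC,
          Or.inl ⟨by simp [hcu], by simp [hcv]⟩⟩
    · intro u v hn
      obtain ⟨hadj, h0⟩ := hneg' u v hn
      have hC := fact2 u v hadj h0
      have hcc := hc u v hadj
      cases hcu : c u
      · have hcv : c v = true := by revert hcc; rw [hcu]; cases c v <;> simp
        exact ⟨C (H1.connectedComponentMk v), Or.inr ⟨by simp [hcv], by simp [hcu, hC]⟩⟩
      · have hcv : c v = false := by revert hcc; rw [hcu]; cases c v <;> simp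
        exact ⟨C (H1.connectedComponentMk u), Or.inl ⟨by simp [hcu], by simp [hcv, hC]⟩⟩
  · have hmem3 : (3:ℝ) ∈ {r : ℝ | 1 ≤ r ∧ ∃ φ : V → ℝ, (toSGraph G σ).IsCircColoring r φ} := by
      refine ⟨by norm_num, fun v => ((C (H1.connectedComponentMk v)).val : ℝ) +
        (if sw 0 v then 3/2 else 0), ?_, ?_⟩
      · intro u v hp
        obtain ⟨hadj, hσ⟩ := hp
        beta_reduce
        have h00 := hsw 0 u v hadj
        rw [hσ] at h00
        obtain ⟨m, hm3, hmeq⟩ : ∃ m : ℕ, m < 3 ∧ (C (H1.connectedComponentMk u)).val = m :=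
          ⟨_, (C (H1.connectedComponentMk u)).isLt, rfl⟩
        obtain ⟨n, hn3, hneq⟩ : ∃ n : ℕ, n < 3 ∧ (C (H1.connectedComponentMk v)).val = n :=
          ⟨_, (C (H1.connectedComponentMk v)).isLt, rfl⟩
        rw [hmeq, hneq]
        by_cases hs : sw 0 u = sw 0 v
        · have h0 : τ 0 s(u,v) = true := by rw [h00, hs]; cases sw 0 v <;> simp
          have hmn : m ≠ n := by
            rw [← hmeq, ← hneq]
            exact fun h => fact1 u v hadj h0 (Fin.val_injective h)
          clear hmeq hneq
          rw [hs]
          cases hsv : sw 0 v <;>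
            simp only [if_true, if_false, Bool.false_eq_true, ite_true, ite_false] <;>
            interval_cases m <;> interval_cases n <;>
            first
              | exact absurd rfl hmn
              | (apply cdist_ge3 _ _ 0 <;> (push_cast; norm_num; done))
              | (apply cdist_ge3 _ _ (-1) <;> (push_cast; norm_num; done))
              | (apply cdist_ge3 _ _ (-2) <;> (push_cast; norm_num; done))
        · have h0 : τ 0 s(u,v) = false := by
            rw [h00]; revert hs; cases sw 0 u <;> cases sw 0 v <;> simp
          have hmn : m = n := by rw [← hmeq, ← hneq, fact2 u v hadj h0]
          subst hmn
          clear hmeq hneq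
          cases hsu : sw 0 u <;> cases hsv : sw 0 v <;>
            simp only [if_true, if_false, Bool.false_eq_true, ite_true, ite_false] <;>
            first
              | exact absurd (hsu.trans hsv.symm) hs
              | (apply cdist_ge3 _ _ 0 <;> (push_cast; linarith))
              | (apply cdist_ge3 _ _ (-1) <;> (push_cast; linarith))
      · intro u v hn
        obtain ⟨hadj, hσ⟩ := hn
        beta_reduce
        have h00 := hsw 0 u v hadj
        rw [hσ] at h00
        obtain ⟨m, hm3, hmeq⟩ : ∃ m : ℕ, m < 3 ∧ (C (H1.connectedComponentMk u)).val = m :=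
          ⟨_, (C (H1.connectedComponentMk u)).isLt, rfl⟩
        obtain ⟨n, hn3, hneq⟩ : ∃ n : ℕ, n < 3 ∧ (C (H1.connectedComponentMk v)).val = n :=
          ⟨_, (C (H1.connectedComponentMk v)).isLt, rfl⟩
        rw [hmeq, hneq]
        by_cases hs : sw 0 u = sw 0 v
        · have h0 : τ 0 s(u,v) = false := by rw [h00, hs]; cases sw 0 v <;> simp
          have hmn : m = n := by rw [← hmeq, ← hneq, fact2 u v hadj h0]
          subst hmn
          clear hmeq hneq
          rw [hs]
          cases hsv : sw 0 v <;>
            simp only [if_true, if_false, Bool.false_eq_true, ite_true, ite_false] <;>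
            (apply cdist_ge3 _ _ (-1) <;> (push_cast; linarith))
        · have h0 : τ 0 s(u,v) = true := by
            rw [h00]; revert hs; cases sw 0 u <;> cases sw 0 v <;> simp
          have hmn : m ≠ n := by
            rw [← hmeq, ← hneq]
            exact fun h => fact1 u v hadj h0 (Fin.val_injective h)
          clear hmeq hneq
          cases hsu : sw 0 u <;> cases hsv : sw 0 v <;>
            simp only [if_true, if_false, Bool.false_eq_true, ite_true, ite_false] <;>
            first
              | exact absurd (hsu.trans hsv.symm) hs
              | (interval_cases m <;> interval_cases n <;>
                 first
                   | exact absurd rfl hmn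
                   | (apply cdist_ge3 _ _ 0 <;> (push_cast; norm_num; done))
                   | (apply cdist_ge3 _ _ (-1) <;> (push_cast; norm_num; done))
                   | (apply cdist_ge3 _ _ (-2) <;> (push_cast; norm_num; done)))
    have hbdd : BddBelow {r : ℝ | 1 ≤ r ∧ ∃ φ : V → ℝ, (toSGraph G σ).IsCircColoring r φ} :=
      ⟨1, fun r hr => hr.1⟩
    exact csInf_le hbdd hmem3
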